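/- Cauchy indices are additive over path join: if γ₁ and γ₂ are continuous paths with γ₁(1) = γ₂(0), each having finitely many real-part-constancy segments with respect to z₀, then cindex_pathE (γ₁ ++ γ₂) z₀ = cindex_pathE γ₁ z₀ + cindex_pathE γ₂ z₀. -/

import Mathlib

open Complex Filter Topology Polynomial Set

open Classical in
noncomputable def jumpF (f : ℝ → ℝ) (F : Filter ℝ) : ℝ :=
  if Tendsto f F atTop then 1/2 else if Tendsto f F atBot then -1/2 else 0

noncomputable def cindexE (a b : ℝ) (f : ℝ → ℝ) : ℝ :=
  (∑ᶠ x ∈ {x : ℝ | jumpF f (𝓝[>] x) ≠ 0 ∧ a ≤ x ∧ x < b}, jumpF f (𝓝[>] x)) -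
  (∑ᶠ x ∈ {x : ℝ | jumpF f (𝓝[<] x) ≠ 0 ∧ a < x ∧ x ≤ b}, jumpF f (𝓝[<] x))

noncomputable def cindexPathE (γ : ℝ → ℂ) (z : ℂ) : ℝ :=
  cindexE 0 1 fun t => (γ t - z).im / (γ t - z).re

/-- Joining two paths parametrised on `[0,1]`. -/
noncomputable def joinPaths (γ₁ γ₂ : ℝ → ℂ) : ℝ → ℂ :=
  fun t => if t ≤ 1/2 then γ₁ (2 * t) else γ₂ (2 * t - 1)

/-- A predicate `P` admits a finite segmentation of `[a,b]`. -/
inductive FinitePsegments (P : ℝ → Prop) : ℝ → ℝ → Prop where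
  | emptyI (a b : ℝ) (hab : b ≤ a) : FinitePsegments P a b
  | insertI_1 (a b s : ℝ) (hs : s ∈ Set.Ico a b) (h0 : s = a ∨ P s)
      (hP : ∀ t ∈ Set.Ioo s b, P t) (hrec : FinitePsegments P a s) :
      FinitePsegments P a b
  | insertI_2 (a b s : ℝ) (hs : s ∈ Set.Ico a b) (h0 : s = a ∨ P s)
      (hP : ∀ t ∈ Set.Ioo s b, ¬ P t) (hrec : FinitePsegments P a s) :
      FinitePsegments P a b

/-- `[0,1]` decomposes into finitely many consecutive subintervals on each of whose
interiors `Re (γ t - z) = 0` holds identically or fails identically. -/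
def finiteReZSegments (γ : ℝ → ℂ) (z : ℂ) : Prop :=
  FinitePsegments (fun t => (γ t - z).re = 0) 0 1


lemma jumpF_congr {f h : ℝ → ℝ} {F : Filter ℝ} (e : f =ᶠ[F] h) : jumpF f F = jumpF h F := by
  unfold jumpF
  rw [tendsto_congr' e, tendsto_congr' e]

lemma jumpF_eq_zero_of_tendsto {f : ℝ → ℝ} {F : Filter ℝ} [F.NeBot] {l : ℝ}
    (h : Tendsto f F (𝓝 l)) : jumpF f F = 0 := by
  unfold jumpF
  rw [if_neg (not_tendsto_atTop_of_tendsto_nhds h), if_neg (not_tendsto_atBot_of_tendsto_nhds h)]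

lemma jumpF_comp_affine_right (f : ℝ → ℝ) {c : ℝ} (d x : ℝ) (hc : 0 < c) :
    jumpF (fun t => f (c * t + d)) (𝓝[>] x) = jumpF f (𝓝[>] (c * x + d)) := by
  have hφc : ContinuousWithinAt (fun t : ℝ => c * t + d) (Set.Ioi x) x :=
    ((continuous_const.mul continuous_id).add continuous_const).continuousWithinAt
  have hφ : Tendsto (fun t : ℝ => c * t + d) (𝓝[>] x) (𝓝[>] (c * x + d)) :=
    hφc.tendsto_nhdsWithin (fun t ht => by simp only [mem_Ioi] at *; nlinarith)
  have hψc : ContinuousWithinAt (fun y : ℝ => (y - d) / c) (Set.Ioi (c * x + d)) (c * x + d) :=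
    ((continuous_id.sub continuous_const).div_const c).continuousWithinAt
  have hψ0 : Tendsto (fun y : ℝ => (y - d) / c) (𝓝[>] (c * x + d))
      (𝓝[Set.Ioi x] ((c * x + d - d) / c)) :=
    hψc.tendsto_nhdsWithin (fun y hy => by
      simp only [mem_Ioi] at *
      rw [lt_div_iff₀ hc]; nlinarith)
  have hψ : Tendsto (fun y : ℝ => (y - d) / c) (𝓝[>] (c * x + d)) (𝓝[>] x) := by
    have : (c * x + d - d) / c = x := by field_simp; ring
    rwa [this] at hψ0
  have hfun : (fun y : ℝ => f (c * ((y - d) / c) + d)) = f := by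
    funext y; congr 1; field_simp; ring
  have key : ∀ (L : Filter ℝ),
      Tendsto (fun t => f (c * t + d)) (𝓝[>] x) L ↔ Tendsto f (𝓝[>] (c * x + d)) L := by
    intro L
    constructor
    · intro h
      have h2 := h.comp hψ
      rwa [show ((fun t => f (c * t + d)) ∘ fun y : ℝ => (y - d) / c)
        = fun y : ℝ => f (c * ((y - d) / c) + d) from rfl, hfun] at h2
    · intro h; exact h.comp hφ
  unfold jumpF
  rw [key, key]

lemma jumpF_comp_affine_left (f : ℝ → ℝ) {c : ℝ} (d x : ℝ) (hc : 0 < c) :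
    jumpF (fun t => f (c * t + d)) (𝓝[<] x) = jumpF f (𝓝[<] (c * x + d)) := by
  have hφc : ContinuousWithinAt (fun t : ℝ => c * t + d) (Set.Iio x) x :=
    ((continuous_const.mul continuous_id).add continuous_const).continuousWithinAt
  have hφ : Tendsto (fun t : ℝ => c * t + d) (𝓝[<] x) (𝓝[<] (c * x + d)) :=
    hφc.tendsto_nhdsWithin (fun t ht => by simp only [mem_Iio] at *; nlinarith)
  have hψc : ContinuousWithinAt (fun y : ℝ => (y - d) / c) (Set.Iio (c * x + d)) (c * x + d) :=
    ((continuous_id.sub continuous_const).div_const c).continuousWithinAt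
  have hψ0 : Tendsto (fun y : ℝ => (y - d) / c) (𝓝[<] (c * x + d))
      (𝓝[Set.Iio x] ((c * x + d - d) / c)) :=
    hψc.tendsto_nhdsWithin (fun y hy => by
      simp only [mem_Iio] at *
      rw [div_lt_iff₀ hc]; nlinarith)
  have hψ : Tendsto (fun y : ℝ => (y - d) / c) (𝓝[<] (c * x + d)) (𝓝[<] x) := by
    have : (c * x + d - d) / c = x := by field_simp; ring
    rwa [this] at hψ0
  have hfun : (fun y : ℝ => f (c * ((y - d) / c) + d)) = f := by
    funext y; congr 1; field_simp; ring
  have key : ∀ (L : Filter ℝ),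
      Tendsto (fun t => f (c * t + d)) (𝓝[<] x) L ↔ Tendsto f (𝓝[<] (c * x + d)) L := by
    intro L
    constructor
    · intro h
      have h2 := h.comp hψ
      rwa [show ((fun t => f (c * t + d)) ∘ fun y : ℝ => (y - d) / c)
        = fun y : ℝ => f (c * ((y - d) / c) + d) from rfl, hfun] at h2
    · intro h; exact h.comp hφ
  unfold jumpF
  rw [key, key]

lemma cindexE_congr {f g : ℝ → ℝ} {a b : ℝ}
    (hr : ∀ x, a ≤ x → x < b → jumpF f (𝓝[>] x) = jumpF g (𝓝[>] x))
    (hl : ∀ x, a < x → x ≤ b → jumpF f (𝓝[<] x) = jumpF g (𝓝[<] x)) :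
    cindexE a b f = cindexE a b g := by
  unfold cindexE
  congr 1
  · have hset : {x : ℝ | jumpF f (𝓝[>] x) ≠ 0 ∧ a ≤ x ∧ x < b}
        = {x : ℝ | jumpF g (𝓝[>] x) ≠ 0 ∧ a ≤ x ∧ x < b} := by
      ext x
      simp only [mem_setOf_eq, and_congr_left_iff]
      rintro ⟨h2, h3⟩
      rw [hr x h2 h3]
    rw [hset]
    exact finsum_mem_congr rfl fun x hx => hr x hx.2.1 hx.2.2
  · have hset : {x : ℝ | jumpF f (𝓝[<] x) ≠ 0 ∧ a < x ∧ x ≤ b}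
        = {x : ℝ | jumpF g (𝓝[<] x) ≠ 0 ∧ a < x ∧ x ≤ b} := by
      ext x
      simp only [mem_setOf_eq, and_congr_left_iff]
      rintro ⟨h2, h3⟩
      rw [hl x h2 h3]
    rw [hset]
    exact finsum_mem_congr rfl fun x hx => hl x hx.2.1 hx.2.2

lemma cindexE_comp_affine (f : ℝ → ℝ) {c : ℝ} (d a b : ℝ) (hc : 0 < c) :
    cindexE a b (fun t => f (c * t + d)) = cindexE (c * a + d) (c * b + d) f := by
  have hinj : Function.Injective (fun x : ℝ => c * x + d) := fun p q h => by
    simp only at h; nlinarith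
  unfold cindexE
  congr 1
  · have hset : {x : ℝ | jumpF (fun t => f (c * t + d)) (𝓝[>] x) ≠ 0 ∧ a ≤ x ∧ x < b}
        = {x : ℝ | jumpF f (𝓝[>] (c * x + d)) ≠ 0 ∧ a ≤ x ∧ x < b} := by
      ext x; simp only [mem_setOf_eq, jumpF_comp_affine_right f d x hc]
    have himg : (fun x : ℝ => c * x + d) ''
        {x : ℝ | jumpF f (𝓝[>] (c * x + d)) ≠ 0 ∧ a ≤ x ∧ x < b}
        = {y : ℝ | jumpF f (𝓝[>] y) ≠ 0 ∧ c * a + d ≤ y ∧ y < c * b + d} := by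
      ext y
      simp only [mem_image, mem_setOf_eq]
      constructor
      · rintro ⟨x, ⟨j, hx1, hx2⟩, rfl⟩
        exact ⟨j, by nlinarith, by nlinarith⟩
      · rintro ⟨j, hy1, hy2⟩
        have hy : c * ((y - d) / c) + d = y := by field_simp; ring
        refine ⟨(y - d) / c, ⟨by rwa [hy], ?_, ?_⟩, hy⟩
        · rw [le_div_iff₀ hc]; nlinarith
        · rw [div_lt_iff₀ hc]; nlinarith
    rw [hset, ← himg, finsum_mem_image (hinj.injOn)]
    exact finsum_mem_congr rfl fun x hx => jumpF_comp_affine_right f d x hc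
  · have hset : {x : ℝ | jumpF (fun t => f (c * t + d)) (𝓝[<] x) ≠ 0 ∧ a < x ∧ x ≤ b}
        = {x : ℝ | jumpF f (𝓝[<] (c * x + d)) ≠ 0 ∧ a < x ∧ x ≤ b} := by
      ext x; simp only [mem_setOf_eq, jumpF_comp_affine_left f d x hc]
    have himg : (fun x : ℝ => c * x + d) ''
        {x : ℝ | jumpF f (𝓝[<] (c * x + d)) ≠ 0 ∧ a < x ∧ x ≤ b}
        = {y : ℝ | jumpF f (𝓝[<] y) ≠ 0 ∧ c * a + d < y ∧ y ≤ c * b + d} := by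
      ext y
      simp only [mem_image, mem_setOf_eq]
      constructor
      · rintro ⟨x, ⟨j, hx1, hx2⟩, rfl⟩
        exact ⟨j, by nlinarith, by nlinarith⟩
      · rintro ⟨j, hy1, hy2⟩
        have hy : c * ((y - d) / c) + d = y := by field_simp; ring
        refine ⟨(y - d) / c, ⟨by rwa [hy], ?_, ?_⟩, hy⟩
        · rw [lt_div_iff₀ hc]; nlinarith
        · rw [div_le_iff₀ hc]; nlinarith
    rw [hset, ← himg, finsum_mem_image (hinj.injOn)]
    exact finsum_mem_congr rfl fun x hx => jumpF_comp_affine_left f d x hc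

lemma cindexE_add (a b c : ℝ) (f : ℝ → ℝ) (hab : a ≤ b) (hbc : b ≤ c)
    (h1 : {x : ℝ | jumpF f (𝓝[>] x) ≠ 0 ∧ a ≤ x ∧ x < b}.Finite)
    (h2 : {x : ℝ | jumpF f (𝓝[>] x) ≠ 0 ∧ b ≤ x ∧ x < c}.Finite)
    (h3 : {x : ℝ | jumpF f (𝓝[<] x) ≠ 0 ∧ a < x ∧ x ≤ b}.Finite)
    (h4 : {x : ℝ | jumpF f (𝓝[<] x) ≠ 0 ∧ b < x ∧ x ≤ c}.Finite) :
    cindexE a c f = cindexE a b f + cindexE b c f := by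
  unfold cindexE
  have e1 : {x : ℝ | jumpF f (𝓝[>] x) ≠ 0 ∧ a ≤ x ∧ x < c}
      = {x : ℝ | jumpF f (𝓝[>] x) ≠ 0 ∧ a ≤ x ∧ x < b}
        ∪ {x : ℝ | jumpF f (𝓝[>] x) ≠ 0 ∧ b ≤ x ∧ x < c} := by
    ext x
    simp only [mem_union, mem_setOf_eq]
    constructor
    · rintro ⟨j, hx, hx'⟩
      rcases lt_or_ge x b with h | h
      · exact Or.inl ⟨j, hx, h⟩
      · exact Or.inr ⟨j, h, hx'⟩
    · rintro (⟨j, hx, hx'⟩ | ⟨j, hx, hx'⟩)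
      exacts [⟨j, hx, hx'.trans_le hbc⟩, ⟨j, hab.trans hx, hx'⟩]
  have e2 : {x : ℝ | jumpF f (𝓝[<] x) ≠ 0 ∧ a < x ∧ x ≤ c}
      = {x : ℝ | jumpF f (𝓝[<] x) ≠ 0 ∧ a < x ∧ x ≤ b}
        ∪ {x : ℝ | jumpF f (𝓝[<] x) ≠ 0 ∧ b < x ∧ x ≤ c} := by
    ext x
    simp only [mem_union, mem_setOf_eq]
    constructor
    · rintro ⟨j, hx, hx'⟩
      rcases le_or_gt x b with h | h
      · exact Or.inl ⟨j, hx, h⟩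
      · exact Or.inr ⟨j, h, hx'⟩
    · rintro (⟨j, hx, hx'⟩ | ⟨j, hx, hx'⟩)
      exacts [⟨j, hx, hx'.trans hbc⟩, ⟨j, hab.trans_lt hx, hx'⟩]
  have d1 : Disjoint {x : ℝ | jumpF f (𝓝[>] x) ≠ 0 ∧ a ≤ x ∧ x < b}
      {x : ℝ | jumpF f (𝓝[>] x) ≠ 0 ∧ b ≤ x ∧ x < c} := by
    rw [Set.disjoint_left]
    rintro x ⟨_, _, h⟩ ⟨_, h', _⟩
    exact absurd h' (not_le.2 h)
  have d2 : Disjoint {x : ℝ | jumpF f (𝓝[<] x) ≠ 0 ∧ a < x ∧ x ≤ b}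
      {x : ℝ | jumpF f (𝓝[<] x) ≠ 0 ∧ b < x ∧ x ≤ c} := by
    rw [Set.disjoint_left]
    rintro x ⟨_, _, h⟩ ⟨_, h', _⟩
    exact absurd h' (not_lt.2 h)
  rw [e1, e2, finsum_mem_union d1 h1 h2, finsum_mem_union d2 h3 h4]
  ring

lemma finitePsegments_exists_S {P : ℝ → Prop} {a b : ℝ} (h : FinitePsegments P a b) :
    ∃ S : Set ℝ, S.Finite ∧ ∀ x ∈ Set.Ioo a b, x ∉ S →
      ∃ u v, u < x ∧ x < v ∧ ((∀ t ∈ Set.Ioo u v, P t) ∨ (∀ t ∈ Set.Ioo u v, ¬ P t)) := by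
  induction h with
  | emptyI b hab =>
    exact ⟨∅, finite_empty, fun x hx _ => absurd (hx.1.trans hx.2) (not_lt.2 hab)⟩
  | insertI_1 b s hs h0 hP hrec IH =>
    obtain ⟨S, hSf, hS⟩ := IH
    refine ⟨insert s S, hSf.insert s, ?_⟩
    intro x hx hxS
    rcases lt_trichotomy x s with h | h | h
    · exact hS x ⟨hx.1, h⟩ fun c => hxS (mem_insert_of_mem _ c)
    · exact absurd (h ▸ mem_insert s S) hxS
    · exact ⟨s, b, h, hx.2, Or.inl hP⟩
  | insertI_2 b s hs h0 hP hrec IH =>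
    obtain ⟨S, hSf, hS⟩ := IH
    refine ⟨insert s S, hSf.insert s, ?_⟩
    intro x hx hxS
    rcases lt_trichotomy x s with h | h | h
    · exact hS x ⟨hx.1, h⟩ fun c => hxS (mem_insert_of_mem _ c)
    · exact absurd (h ▸ mem_insert s S) hxS
    · exact ⟨s, b, h, hx.2, Or.inr hP⟩

lemma jump_sets_finite {γ : ℝ → ℂ} {z : ℂ}
    (hfin : FinitePsegments (fun t => (γ t - z).re = 0) 0 1)
    (hcont : ContinuousOn γ (Set.Icc 0 1)) :
    {x : ℝ | jumpF (fun t => (γ t - z).im / (γ t - z).re) (𝓝[>] x) ≠ 0 ∧ 0 ≤ x ∧ x < 1}.Finite ∧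
    {x : ℝ | jumpF (fun t => (γ t - z).im / (γ t - z).re) (𝓝[<] x) ≠ 0 ∧ 0 < x ∧ x ≤ 1}.Finite := by
  obtain ⟨S, hSf, hS⟩ := finitePsegments_exists_S hfin
  set f : ℝ → ℝ := fun t => (γ t - z).im / (γ t - z).re with hf
  have key : ∀ x ∈ Set.Ioo (0:ℝ) 1, x ∉ S → jumpF f (𝓝[>] x) = 0 ∧ jumpF f (𝓝[<] x) = 0 := by
    intro x hx hxS
    obtain ⟨u, v, hu, hv, hcase⟩ := hS x hx hxS
    rcases hcase with hP | hP
    · have hmem : Set.Ioo u v ∈ 𝓝 x := Ioo_mem_nhds hu hv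
      have hev : f =ᶠ[𝓝 x] fun _ => (0:ℝ) :=
        eventually_of_mem hmem fun t ht => by
          show (γ t - z).im / (γ t - z).re = 0
          rw [hP t ht, div_zero]
      constructor
      · rw [jumpF_congr (hev.filter_mono nhdsWithin_le_nhds)]
        exact jumpF_eq_zero_of_tendsto (l := 0) tendsto_const_nhds
      · rw [jumpF_congr (hev.filter_mono nhdsWithin_le_nhds)]
        exact jumpF_eq_zero_of_tendsto (l := 0) tendsto_const_nhds
    · have hγ : ContinuousAt γ x := hcont.continuousAt (Icc_mem_nhds hx.1 hx.2)
      have hre : (γ x - z).re ≠ 0 := hP x ⟨hu, hv⟩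
      have hsub : ContinuousAt (fun t => γ t - z) x := hγ.sub continuousAt_const
      have hf' : ContinuousAt f x :=
        (Complex.continuous_im.continuousAt.comp hsub).div
          (Complex.continuous_re.continuousAt.comp hsub) hre
      constructor
      · exact jumpF_eq_zero_of_tendsto (hf'.tendsto.mono_left nhdsWithin_le_nhds)
      · exact jumpF_eq_zero_of_tendsto (hf'.tendsto.mono_left nhdsWithin_le_nhds)
  constructor
  · refine (hSf.insert 0).subset ?_
    rintro x ⟨hj, hx0, hx1⟩
    by_contra hxn
    simp only [mem_insert_iff, not_or] at hxn
    exact hj (key x ⟨lt_of_le_of_ne hx0 (Ne.symm hxn.1), hx1⟩ hxn.2).1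
  · refine (hSf.insert 1).subset ?_
    rintro x ⟨hj, hx0, hx1⟩
    by_contra hxn
    simp only [mem_insert_iff, not_or] at hxn
    exact hj (key x ⟨hx0, lt_of_le_of_ne hx1 hxn.1⟩ hxn.2).2


theorem cindex_pathE_joinpaths (γ₁ γ₂ : ℝ → ℂ) (z₀ : ℂ)
    (h1 : finiteReZSegments γ₁ z₀) (h2 : finiteReZSegments γ₂ z₀)
    (hp1 : ContinuousOn γ₁ (Set.Icc 0 1)) (hp2 : ContinuousOn γ₂ (Set.Icc 0 1))
    (hjoin : γ₁ 1 = γ₂ 0) :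
    cindexPathE (joinPaths γ₁ γ₂) z₀ = cindexPathE γ₁ z₀ + cindexPathE γ₂ z₀ := by
  set f1 : ℝ → ℝ := fun t => (γ₁ t - z₀).im / (γ₁ t - z₀).re with hf1
  set f2 : ℝ → ℝ := fun t => (γ₂ t - z₀).im / (γ₂ t - z₀).re with hf2
  set g : ℝ → ℝ := fun t => (joinPaths γ₁ γ₂ t - z₀).im / (joinPaths γ₁ γ₂ t - z₀).re with hg
  obtain ⟨F1r, F1l⟩ := jump_sets_finite h1 hp1
  obtain ⟨F2r, F2l⟩ := jump_sets_finite h2 hp2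
  -- germ identifications
  have germ1r : ∀ x : ℝ, x < 1/2 →
      jumpF g (𝓝[>] x) = jumpF (fun t => f1 (2 * t + 0)) (𝓝[>] x) := by
    intro x hx
    apply jumpF_congr
    have : Set.Iio (1/2 : ℝ) ∈ 𝓝[>] x := nhdsWithin_le_nhds (Iio_mem_nhds hx)
    filter_upwards [this] with t ht
    simp only [hg, hf1, joinPaths, if_pos (le_of_lt (mem_Iio.1 ht))]
    norm_num
  have germ1l : ∀ x : ℝ, x ≤ 1/2 →
      jumpF g (𝓝[<] x) = jumpF (fun t => f1 (2 * t + 0)) (𝓝[<] x) := by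
    intro x hx
    apply jumpF_congr
    filter_upwards [self_mem_nhdsWithin] with t ht
    have ht' : t ≤ 1/2 := le_of_lt (lt_of_lt_of_le ht hx)
    simp only [hg, hf1, joinPaths, if_pos ht']
    norm_num
  have germ2r : ∀ x : ℝ, 1/2 ≤ x →
      jumpF g (𝓝[>] x) = jumpF (fun t => f2 (2 * t + (-1))) (𝓝[>] x) := by
    intro x hx
    apply jumpF_congr
    filter_upwards [self_mem_nhdsWithin] with t ht
    have ht' : ¬ (t ≤ 1/2) := not_le.2 (lt_of_le_of_lt hx ht)
    simp only [hg, hf2, joinPaths, if_neg ht']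
    norm_num
    ring_nf
  have germ2l : ∀ x : ℝ, 1/2 < x →
      jumpF g (𝓝[<] x) = jumpF (fun t => f2 (2 * t + (-1))) (𝓝[<] x) := by
    intro x hx
    apply jumpF_congr
    have : Set.Ioi (1/2 : ℝ) ∈ 𝓝[<] x := nhdsWithin_le_nhds (Ioi_mem_nhds hx)
    filter_upwards [this] with t ht
    have ht' : ¬ (t ≤ 1/2) := not_le.2 ht
    simp only [hg, hf2, joinPaths, if_neg ht']
    norm_num
    ring_nf
  have h2pos : (0:ℝ) < 2 := by norm_num
  -- finiteness of the four jump sets of g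
  have hinj1 : Function.Injective (fun x : ℝ => 2 * x + 0) := fun p q h => by
    simp only at h; linarith
  have hinj2 : Function.Injective (fun x : ℝ => 2 * x + (-1)) := fun p q h => by
    simp only at h; linarith
  have fin1r : {x : ℝ | jumpF g (𝓝[>] x) ≠ 0 ∧ 0 ≤ x ∧ x < 1/2}.Finite := by
    refine ((F1r.preimage hinj1.injOn).subset ?_)
    rintro x ⟨hj, hx0, hx1⟩
    rw [germ1r x hx1, jumpF_comp_affine_right f1 0 x h2pos] at hj
    exact ⟨hj, by change (0:ℝ) ≤ 2 * x + 0; linarith, by change (2:ℝ) * x + 0 < 1; linarith⟩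
  have fin2r : {x : ℝ | jumpF g (𝓝[>] x) ≠ 0 ∧ 1/2 ≤ x ∧ x < 1}.Finite := by
    refine ((F2r.preimage hinj2.injOn).subset ?_)
    rintro x ⟨hj, hx0, hx1⟩
    rw [germ2r x hx0, jumpF_comp_affine_right f2 (-1) x h2pos] at hj
    exact ⟨hj, by change (0:ℝ) ≤ 2 * x + (-1); linarith, by change (2:ℝ) * x + (-1) < 1; linarith⟩
  have fin1l : {x : ℝ | jumpF g (𝓝[<] x) ≠ 0 ∧ 0 < x ∧ x ≤ 1/2}.Finite := by
    refine ((F1l.preimage hinj1.injOn).subset ?_)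
    rintro x ⟨hj, hx0, hx1⟩
    rw [germ1l x hx1, jumpF_comp_affine_left f1 0 x h2pos] at hj
    exact ⟨hj, by change (0:ℝ) < 2 * x + 0; linarith, by change (2:ℝ) * x + 0 ≤ 1; linarith⟩
  have fin2l : {x : ℝ | jumpF g (𝓝[<] x) ≠ 0 ∧ 1/2 < x ∧ x ≤ 1}.Finite := by
    refine ((F2l.preimage hinj2.injOn).subset ?_)
    rintro x ⟨hj, hx0, hx1⟩
    rw [germ2l x hx0, jumpF_comp_affine_left f2 (-1) x h2pos] at hj
    exact ⟨hj, by change (0:ℝ) < 2 * x + (-1); linarith, by change (2:ℝ) * x + (-1) ≤ 1; linarith⟩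
  have hA : cindexE 0 (1/2) g = cindexE 0 1 f1 := by
    have step1 : cindexE 0 (1/2) g = cindexE 0 (1/2) (fun t => f1 (2 * t + 0)) :=
      cindexE_congr (fun x _ hx' => germ1r x hx') (fun x _ hx' => germ1l x hx')
    rw [step1, cindexE_comp_affine f1 0 0 (1/2) h2pos]
    norm_num
  have hB : cindexE (1/2) 1 g = cindexE 0 1 f2 := by
    have step1 : cindexE (1/2) 1 g = cindexE (1/2) 1 (fun t => f2 (2 * t + (-1))) :=
      cindexE_congr (fun x hx _ => germ2r x hx) (fun x hx _ => germ2l x hx)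
    rw [step1, cindexE_comp_affine f2 (-1) (1/2) 1 h2pos]
    norm_num
  have : cindexPathE (joinPaths γ₁ γ₂) z₀ = cindexE 0 1 g := rfl
  rw [this, cindexE_add 0 (1/2) 1 g (by norm_num) (by norm_num) fin1r fin2r fin1l fin2l, hA, hB]
  rfl
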